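/- Let μ be a probability measure on ℝ with finite moments m_j = ∫ x^j dμ(x) for j = 0, 1, …, 2N−1 (so m_0 = 1). Let G ∈ ℝ^{N×N} be the Hankel matrix with entries G_{ij} = m_{i+j} (indices 0 ≤ i, j ≤ N−1), assumed positive definite with lower-triangular Cholesky factor L, let H ∈ ℝ^{N×N} have entries H_{ij} = m_{i+j+1}, and set J = L⁻¹ H (Lᵀ)⁻¹. Let λ_1, …, λ_N be the eigenvalues of the symmetric matrix J with corresponding orthonormal eigenvectors u_1, …, u_N, and define weights w_n = (u_{n,1})², the square of the first component of u_n. Then the weights are nonnegative, ∑_{n=1}^N w_n = 1, and the quadrature is exact up to degree 2N−1: ∑_{n=1}^N w_n λ_n^j = m_j for every j = 0, 1, …, 2N−1. -/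

import Mathlib

open MeasureTheory Matrix Finset

/-- Unidimensional moment quadrature: with `G` the `N × N` Hankel moment matrix
(positive definite, with lower-triangular Cholesky factor `L`), `H` the shifted Hankel matrix,
`J = L⁻¹ H (Lᵀ)⁻¹`, eigenvalues `lam n` of `J` with orthonormal eigenvectors `u n`, and weights
`w n = (u n)₁²` (square of the first component), the weights are nonnegative, sum to `1`, and
the quadrature is exact up to degree `2N − 1`: `∑ₙ wₙ λₙʲ = mⱼ` for all `j ≤ 2N − 1`. -/
theorem moment_quadrature_1d_exactness
    (N : ℕ) (hN : 0 < N)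
    (μ : Measure ℝ) [IsProbabilityMeasure μ]
    (hmom : ∀ j ≤ 2 * N - 1, Integrable (fun x : ℝ => x ^ j) μ)
    (G : Matrix (Fin N) (Fin N) ℝ)
    (hG : ∀ i j : Fin N, G i j = ∫ x, x ^ ((i : ℕ) + (j : ℕ)) ∂μ)
    (hGpd : G.PosDef)
    (L : Matrix (Fin N) (Fin N) ℝ)
    (hL_lower : ∀ i j : Fin N, i < j → L i j = 0)
    (hLLT : L * L.transpose = G)
    (H : Matrix (Fin N) (Fin N) ℝ)
    (hH : ∀ i j : Fin N, H i j = ∫ x, x ^ ((i : ℕ) + (j : ℕ) + 1) ∂μ)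
    (J : Matrix (Fin N) (Fin N) ℝ)
    (hJ : J = L⁻¹ * H * (L.transpose)⁻¹)
    (lam : Fin N → ℝ) (u : Fin N → (Fin N → ℝ))
    (hu_orth : ∀ n m, u n ⬝ᵥ u m = if n = m then (1 : ℝ) else 0)
    (heig : ∀ n, J *ᵥ u n = lam n • u n)
    (w : Fin N → ℝ)
    (hw : ∀ n, w n = (u n ⟨0, hN⟩) ^ 2) :
    (∀ n, 0 ≤ w n) ∧ (∑ n, w n = 1) ∧
      (∀ j ≤ 2 * N - 1, ∑ n, w n * lam n ^ j = ∫ x, x ^ j ∂μ) := by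
  classical
  set z : Fin N := ⟨0, hN⟩ with hz
  set e0 : Fin N → ℝ := Pi.single z 1 with he0def
  set E : Fin N → (Fin N → ℝ) := fun i => Pi.single i 1 with hE
  -- determinant facts
  have hdetGne : G.det ≠ 0 := ne_of_gt hGpd.det_pos
  have hdetG : IsUnit G.det := isUnit_iff_ne_zero.2 hdetGne
  have hdetL : IsUnit L.det := by
    refine isUnit_iff_ne_zero.2 fun h0 => hdetGne ?_
    rw [← hLLT, det_mul, det_transpose, h0, zero_mul]
  have hdetLT : IsUnit (L.transpose).det := by rwa [det_transpose]
  have hLA : L * L⁻¹ = 1 := mul_nonsing_inv L hdetL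
  have hAL : L⁻¹ * L = 1 := nonsing_inv_mul L hdetL
  set A := L⁻¹ with hAdef
  have hATdef : A.transpose = (L.transpose)⁻¹ := transpose_nonsing_inv L
  have hJ' : J = A * (H * A.transpose) := by rw [hJ, ← hATdef, Matrix.mul_assoc]
  -- row zero of A
  have hsum0 : ∀ f : Fin N → ℝ, (∑ k, L z k * f k) = L z z * f z := by
    intro f
    apply Finset.sum_eq_single
    · intro k _ hk
      have hzk : z < k := by
        have hk0 : (k : ℕ) ≠ 0 := fun h => hk (Fin.ext (by simpa [hz] using h))
        rw [Fin.lt_def]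
        simpa [hz] using Nat.pos_of_ne_zero hk0
      rw [hL_lower z k hzk, zero_mul]
    · intro h
      exact absurd (Finset.mem_univ z) h
  have hrow : ∀ m : Fin N, L z z * A z m = if z = m then 1 else 0 := by
    intro m
    have h1 : (L * A) z m = (1 : Matrix (Fin N) (Fin N) ℝ) z m := by rw [hLA]
    rw [Matrix.mul_apply, Matrix.one_apply, hsum0] at h1
    exact h1
  have hdiag : L z z * A z z = 1 := by simpa using hrow z
  have hLzz : L z z ≠ 0 := left_ne_zero_of_mul_eq_one hdiag
  have hA0 : ∀ m : Fin N, m ≠ z → A z m = 0 := by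
    intro m hm
    have := hrow m
    rw [if_neg (fun h => hm h.symm)] at this
    exact (mul_eq_zero.1 this).resolve_left hLzz
  -- G z z = 1 and (A z z)^2 = 1
  have hGzz : G z z = 1 := by
    rw [hG]
    have h0 : ((z : ℕ) + (z : ℕ)) = 0 := rfl
    rw [h0]
    simp
  have hLzz2 : L z z * L z z = 1 := by
    have h1 := congrFun (congrFun hLLT z) z
    rw [Matrix.mul_apply, hsum0, transpose_apply, hGzz] at h1
    exact h1
  have hAzz2 : A z z * A z z = 1 := by nlinarith [hdiag, hLzz2]
  -- symmetry of J
  have hHsymm : H.transpose = H := by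
    ext i j
    rw [transpose_apply, hH, hH, Nat.add_comm (j : ℕ) (i : ℕ)]
  have hJsymm : J.transpose = J := by
    rw [hJ', transpose_mul, transpose_mul, transpose_transpose, hHsymm, Matrix.mul_assoc]
  -- key matrix identities
  have hLTinv : L.transpose * (L.transpose)⁻¹ = 1 := mul_nonsing_inv _ hdetLT
  have hGAT : G * A.transpose = L := by
    rw [← hLLT, hATdef, Matrix.mul_assoc, hLTinv, Matrix.mul_one]
  have hAGAT : A * (G * A.transpose) = 1 := by rw [hGAT]; exact hAL
  have hATA : A.transpose * A = G⁻¹ := by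
    rw [hATdef, hAdef, ← Matrix.mul_inv_rev, hLLT]
  have hATJ : A.transpose * J = G⁻¹ * (H * A.transpose) := by
    rw [hJ', ← Matrix.mul_assoc, hATA]
  have hGinvl : G⁻¹ * G = 1 := nonsing_inv_mul G hdetG
  -- the main induction: Aᵀ (Jᵃ e₀) = A z z • eₐ
  have hv : ∀ a : ℕ, ∀ ha : a < N,
      A.transpose *ᵥ ((J ^ a) *ᵥ e0) = A z z • E ⟨a, ha⟩ := by
    intro a
    induction a with
    | zero =>
      intro ha
      funext k
      rw [pow_zero, one_mulVec, he0def, mulVec_single_one]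
      simp only [hE, Pi.smul_apply, Pi.single_apply, smul_eq_mul, transpose_apply, mul_one, col_apply]
      by_cases hkz : k = z
      · subst hkz
        simp [hz]
      · rw [hA0 k hkz, if_neg (fun h => hkz (by simpa [hz] using h)), mul_zero]
    | succ a ih =>
      intro ha
      have haN : a < N := Nat.lt_of_succ_lt ha
      have hstep : (J ^ (a + 1)) *ᵥ e0 = J *ᵥ ((J ^ a) *ᵥ e0) := by
        rw [mulVec_mulVec, ← pow_succ']
      have hHcol : H *ᵥ E ⟨a, haN⟩ = G *ᵥ E ⟨a + 1, ha⟩ := by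
        rw [hE, mulVec_single_one, mulVec_single_one]
        funext i
        have hexp : ((i : ℕ) + ((⟨a, haN⟩ : Fin N) : ℕ) + 1)
            = (i : ℕ) + ((⟨a + 1, ha⟩ : Fin N) : ℕ) := by
          show (i : ℕ) + a + 1 = (i : ℕ) + (a + 1)
          omega
        rw [col_apply, col_apply, hH, hG, hexp]
      rw [hstep, mulVec_mulVec, hATJ, ← mulVec_mulVec, ← mulVec_mulVec, ih haN, mulVec_smul,
        hHcol, mulVec_smul, mulVec_mulVec, hGinvl, one_mulVec]
  -- dot product through a middle matrix
  have hdotM : ∀ (M : Matrix (Fin N) (Fin N) ℝ) (i j : Fin N),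
      (A z z • E i) ⬝ᵥ (M *ᵥ (A z z • E j)) = M i j := by
    intro M i j
    rw [hE, mulVec_smul, smul_dotProduct, dotProduct_smul, single_dotProduct, mulVec_single_one]
    simp only [smul_eq_mul, mul_one, one_mul, col_apply]
    rw [← mul_assoc, hAzz2, one_mul]
  have hJmid : ∀ x y : Fin N → ℝ,
      x ⬝ᵥ (J *ᵥ y) = (A.transpose *ᵥ x) ⬝ᵥ (H *ᵥ (A.transpose *ᵥ y)) := by
    intro x y
    conv_lhs => rw [hJ']
    rw [← mulVec_mulVec, dotProduct_mulVec,
      show x ᵥ* A = A.transpose *ᵥ x by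
        rw [← transpose_transpose A, vecMul_transpose, transpose_transpose],
      ← mulVec_mulVec]
  -- the central moment identity
  have hkey : ∀ j : ℕ, j ≤ 2 * N - 1 → e0 ⬝ᵥ ((J ^ j) *ᵥ e0) = ∫ x, x ^ j ∂μ := by
    intro j hj
    rcases Nat.eq_zero_or_pos j with h0 | hpos
    · subst h0
      rw [pow_zero, one_mulVec, he0def, single_dotProduct, one_mul, Pi.single_eq_same]
      simp
    · set a : ℕ := min (j - 1) (N - 1) with hadef
      set b : ℕ := j - 1 - a with hbdef
      have ha : a < N := by omega
      have hb : b < N := by omega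
      have hab : a + b + 1 = j := by omega
      have hpow : J ^ j = J ^ a * (J * J ^ b) := by
        rw [← pow_succ', ← pow_add]
        congr 1
        omega
      have hsymmpow : (J ^ a).transpose = J ^ a := by rw [transpose_pow, hJsymm]
      rw [hpow, ← mulVec_mulVec, dotProduct_mulVec,
        show e0 ᵥ* (J ^ a) = (J ^ a) *ᵥ e0 by rw [← hsymmpow, vecMul_transpose, hsymmpow],
        ← mulVec_mulVec]
      -- now: (Jᵃ e₀) ⬝ᵥ (J *ᵥ (Jᵇ e₀)) = H a b
      have hmid : ((J ^ a) *ᵥ e0) ⬝ᵥ (J *ᵥ ((J ^ b) *ᵥ e0)) = H ⟨a, ha⟩ ⟨b, hb⟩ := by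
        rw [hJmid, hv a ha, hv b hb, hdotM]
      rw [hmid, hH]
      have hexp2 : (((⟨a, ha⟩ : Fin N) : ℕ) + ((⟨b, hb⟩ : Fin N) : ℕ) + 1) = j := by
        show a + b + 1 = j
        omega
      rw [hexp2]
  -- spectral side
  have hspec : ∀ (k : ℕ) (n : Fin N), (J ^ k) *ᵥ u n = (lam n ^ k) • u n := by
    intro k n
    induction k with
    | zero => simp [one_mulVec]
    | succ k ihk =>
      rw [pow_succ', ← mulVec_mulVec, ihk, mulVec_smul, heig, smul_smul, ← pow_succ]
  have hUTU : ∀ k l : Fin N, ∑ n, u n k * u n l = if k = l then 1 else 0 := by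
    set U : Matrix (Fin N) (Fin N) ℝ := Matrix.of u with hU
    have hUU : U * U.transpose = 1 := by
      ext n m
      rw [Matrix.mul_apply, Matrix.one_apply]
      simpa [hU, Matrix.transpose_apply, dotProduct] using hu_orth n m
    have h2 : U.transpose * U = 1 := mul_eq_one_comm.mp hUU
    intro k l
    have := congrFun (congrFun h2 k) l
    rw [Matrix.mul_apply, Matrix.one_apply] at this
    simpa [hU, Matrix.transpose_apply] using this
  have he0sum : e0 = ∑ n, (u n z) • u n := by
    funext k
    have h1 : (∑ n, (u n z) • u n) k = ∑ n, u n z * u n k := by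
      rw [Finset.sum_apply]
      simp only [Pi.smul_apply, smul_eq_mul]
    rw [h1, hUTU z k, he0def]
    rcases eq_or_ne k z with h | h
    · subst h; simp
    · rw [Pi.single_apply, if_neg h, if_neg (fun hh => h hh.symm)]
  have hquad : ∀ k : ℕ, ∑ n, w n * lam n ^ k = e0 ⬝ᵥ ((J ^ k) *ᵥ e0) := by
    intro k
    have hsum : (J ^ k) *ᵥ e0 = ∑ n, (u n z * lam n ^ k) • u n := by
      rw [he0sum, ← mulVecLin_apply, map_sum]
      refine Finset.sum_congr rfl fun n _ => ?_
      rw [LinearMap.map_smul, mulVecLin_apply, hspec, smul_smul]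
    rw [hsum, he0def, single_dotProduct, one_mul, Finset.sum_apply]
    refine Finset.sum_congr rfl fun n _ => ?_
    rw [Pi.smul_apply, smul_eq_mul, hw]
    rw [show u n ⟨0, hN⟩ = u n z from rfl]
    ring
  refine ⟨fun n => by rw [hw]; positivity, ?_, fun j hj => by rw [hquad j, hkey j hj]⟩
  have h := hquad 0
  rw [hkey 0 (Nat.zero_le _)] at h
  simpa using h
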